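/- Let R be a commutative Noetherian ring with total ring of fractions Q(R) and integral closure R̄ of R in Q(R). Then the trace ideal of the R-module R̄ equals the conductor: Tr_R(R̄) = 𝒞(R) = (R : R̄). -/

import Mathlib

universe u

set_option synthInstance.maxHeartbeats 1000000
set_option maxHeartbeats 2000000

/-- The trace ideal of an `R`-module `M`: the ideal of `R` generated by the images of all
`R`-linear maps `M → R`. -/
noncomputable def traceIdeal (R : Type u) [CommRing R] (M : Type u)
    [AddCommGroup M] [Module R M] : Ideal R :=
  ⨆ f : M →ₗ[R] R, LinearMap.range f

/-- Let `R` be a commutative Noetherian ring with total ring of fractions `Q(R)` and integral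
closure `R̄` of `R` in `Q(R)`.  Then the trace ideal of the `R`-module `R̄` equals the conductor
`𝒞(R) = (R : R̄)` (both viewed inside `Q(R)`). -/
theorem trace_integralClosure_eq_conductor (R : Type u) [CommRing R] [IsNoetherianRing R] :
    letI Q := Localization (nonZeroDivisors R)
    Submodule.map (Algebra.linearMap R Q)
        (traceIdeal R ↥(integralClosure R Q)) =
      (1 : Submodule R Q) / (Subalgebra.toSubmodule (integralClosure R Q)) := by
  set Q := Localization (nonZeroDivisors R) with hQ
  have hinj : Function.Injective (algebraMap R Q) := IsFractionRing.injective R Q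
  have key : ∀ (f : ↥(integralClosure R Q) →ₗ[R] R) (x y : ↥(integralClosure R Q)),
      algebraMap R Q (f y) * (x : Q) = algebraMap R Q (f (x * y)) := by
    intro f x y
    obtain ⟨⟨a, s⟩, hs⟩ := IsLocalization.surj (nonZeroDivisors R) (x : Q)
    have hu : IsUnit (algebraMap R Q (s : R)) := IsLocalization.map_units Q s
    apply hu.mul_left_cancel
    have hsx : (s : R) • x = (a : R) • (1 : ↥(integralClosure R Q)) := by
      apply Subtype.ext
      rw [SetLike.val_smul, SetLike.val_smul, OneMemClass.coe_one, Algebra.smul_def,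
        Algebra.smul_def, mul_one, mul_comm]
      exact hs
    calc algebraMap R Q (s : R) * (algebraMap R Q (f y) * (x : Q))
        = algebraMap R Q (f y) * ((x : Q) * algebraMap R Q (s : R)) := by ring
      _ = algebraMap R Q (f y) * algebraMap R Q a := by rw [hs]
      _ = algebraMap R Q (a * f y) := by rw [← map_mul, mul_comm]
      _ = algebraMap R Q (f (a • y)) := by rw [map_smul, smul_eq_mul]
      _ = algebraMap R Q (f ((s : R) • (x * y))) := by
            rw [← smul_mul_assoc, hsx, smul_mul_assoc, one_mul]
      _ = algebraMap R Q (s : R) * algebraMap R Q (f (x * y)) := by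
            rw [map_smul, smul_eq_mul, map_mul]
  apply le_antisymm
  · rintro z hz
    obtain ⟨r, hr, rfl⟩ := hz
    rw [Submodule.mem_div_iff_forall_mul_mem]
    intro y hy
    refine Submodule.iSup_induction
      (motive := fun r => algebraMap R Q r * y ∈ (1 : Submodule R Q)) _ hr
      (fun f w hw => ?_) ?_ ?_
    · obtain ⟨v, rfl⟩ := hw
      have := key f ⟨y, hy⟩ v
      show algebraMap R Q (f v) * y ∈ (1 : Submodule R Q)
      rw [Submodule.mem_one]
      exact ⟨f (⟨y, hy⟩ * v), this.symm⟩
    · show algebraMap R Q 0 * y ∈ (1 : Submodule R Q)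
      rw [map_zero, zero_mul]
      exact zero_mem _
    · intro a b ha hb
      show algebraMap R Q (a + b) * y ∈ (1 : Submodule R Q)
      rw [map_add, add_mul]
      exact Submodule.add_mem _ ha hb
  · intro q hq
    rw [Submodule.mem_div_iff_forall_mul_mem] at hq
    have hmem : ∀ x : ↥(integralClosure R Q), ∃ r : R, algebraMap R Q r = q * (x : Q) := by
      intro x
      have := hq (x : Q) x.2
      rwa [Submodule.mem_one] at this
    choose g hg using hmem
    let f : ↥(integralClosure R Q) →ₗ[R] R :=
      { toFun := g
        map_add' := fun x y => hinj (by
          rw [hg, map_add, hg, hg]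
          push_cast
          ring)
        map_smul' := fun r x => hinj (by
          rw [hg, RingHom.id_apply, smul_eq_mul, map_mul, hg, SetLike.val_smul,
            Algebra.smul_def]
          ring) }
    refine ⟨g 1, ?_, ?_⟩
    · exact le_iSup (fun f : ↥(integralClosure R Q) →ₗ[R] R => LinearMap.range f) f ⟨1, rfl⟩
    · simp only [Algebra.linearMap_apply, hg, OneMemClass.coe_one, mul_one]
      exact (hg 1).trans (mul_one q)
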